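/- With the graph notation below, assume S admits an orthonormal eigenbasis with eigenvalues 1 = λ₁ > λ₂ ≥ ⋯ ≥ λ_N > −1, and let λ = max(|λ₂|, |λ_N|) satisfy 0 < λ < 1. Then for every ε > 0 and every integer ℓ ≥ log(2/(ε(1−λ)))/(2 log(1/λ)), and every node i ∈ {1,…,N}, one has | ((I − S²)†)_{ii} − Σ_{j=0}^{ℓ−1} ( (P^{2j})_{ii} − π_i ) | ≤ ε/2. -/

import Mathlib

open Matrix

/-- `P` is the Moore–Penrose pseudoinverse of `M`. -/
def IsMoorePenrose {n : Type*} [Fintype n] [DecidableEq n]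
    (M P : Matrix n n ℝ) : Prop :=
  M * P * M = M ∧ P * M * P = P ∧ (M * P)ᵀ = M * P ∧ (P * M)ᵀ = P * M

/-- The Moore–Penrose pseudoinverse is unique. -/
lemma mp_unique {n : Type*} [Fintype n] [DecidableEq n] {M P1 P2 : Matrix n n ℝ}
    (h1 : IsMoorePenrose M P1) (h2 : IsMoorePenrose M P2) : P1 = P2 := by
  obtain ⟨a1, b1, c1, d1⟩ := h1
  obtain ⟨a2, b2, c2, d2⟩ := h2
  have hMP : M * P1 = M * P2 := by
    calc M * P1 = (M * P1)ᵀ := c1.symm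
    _ = P1ᵀ * Mᵀ := by rw [transpose_mul]
    _ = P1ᵀ * (M * P2 * M)ᵀ := by rw [a2]
    _ = P1ᵀ * (Mᵀ * (M * P2)ᵀ) := by simp [transpose_mul, Matrix.mul_assoc]
    _ = (P1ᵀ * Mᵀ) * (M * P2) := by rw [c2, Matrix.mul_assoc]
    _ = (M * P1)ᵀ * (M * P2) := by rw [transpose_mul]
    _ = (M * P1) * (M * P2) := by rw [c1]
    _ = (M * P1 * M) * P2 := by rw [Matrix.mul_assoc, Matrix.mul_assoc, Matrix.mul_assoc]
    _ = M * P2 := by rw [a1]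
  have hPM : P1 * M = P2 * M := by
    calc P1 * M = (P1 * M)ᵀ := d1.symm
    _ = Mᵀ * P1ᵀ := by rw [transpose_mul]
    _ = (M * P2 * M)ᵀ * P1ᵀ := by rw [a2]
    _ = ((P2 * M)ᵀ * Mᵀ) * P1ᵀ := by simp [transpose_mul, Matrix.mul_assoc]
    _ = (P2 * M) * (Mᵀ * P1ᵀ) := by rw [d2, Matrix.mul_assoc]
    _ = (P2 * M) * (P1 * M)ᵀ := by rw [transpose_mul]
    _ = (P2 * M) * (P1 * M) := by rw [d1]
    _ = P2 * (M * P1 * M) := by rw [Matrix.mul_assoc, Matrix.mul_assoc]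
    _ = P2 * M := by rw [a1]
  calc P1 = P1 * M * P1 := b1.symm
  _ = P2 * M * P1 := by rw [hPM]
  _ = P2 * (M * P1) := by rw [Matrix.mul_assoc]
  _ = P2 * (M * P2) := by rw [hMP]
  _ = P2 * M * P2 := by rw [Matrix.mul_assoc]
  _ = P2 := b2

set_option maxHeartbeats 1000000 in
/-- for the normalized adjacency matrix `S` of a connected weighted
graph with transition matrix `P` and stationary distribution `π`, if `S` has an
orthonormal eigenbasis with eigenvalues `1 = λ₁ > λ₂ ≥ ⋯ ≥ λ_N > −1` and
`λ = max(|λ₂|,|λ_N|) ∈ (0,1)`, then for every `ε > 0`, every integer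
`ℓ ≥ log(2/(ε(1−λ)))/(2 log(1/λ))` and every node `i`, the truncated series
`Σ_{j=0}^{ℓ−1} ((P^{2j})_{ii} − π_i)` approximates `((I−S²)†)_{ii}` within `ε/2`. -/
theorem stmt2 (N : ℕ) (hN : 2 ≤ N)
    (A : Matrix (Fin N) (Fin N) ℝ) (hA : Aᵀ = A) (hAnn : ∀ i j, 0 ≤ A i j)
    (d : Fin N → ℝ) (hd : ∀ i, d i = ∑ j, A i j) (hdpos : ∀ i, 0 < d i)
    (dsum : ℝ) (hdsum : dsum = ∑ i, d i)
    (P : Matrix (Fin N) (Fin N) ℝ)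
    (hP : P = Matrix.diagonal (fun i => (d i)⁻¹) * A)
    (S : Matrix (Fin N) (Fin N) ℝ)
    (hSdef : S = Matrix.diagonal (fun i => (Real.sqrt (d i))⁻¹) * A *
        Matrix.diagonal (fun i => (Real.sqrt (d i))⁻¹))
    (pv : Fin N → ℝ) (hpv : ∀ i, pv i = d i / dsum)
    (ψ : Fin N → (Fin N → ℝ)) (lam : Fin N → ℝ)
    (heig : ∀ k, S.mulVec (ψ k) = lam k • ψ k)
    (horth : ∀ k l, ψ k ⬝ᵥ ψ l = if k = l then 1 else 0)
    (hlam0 : lam ⟨0, by omega⟩ = 1)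
    (hanti : ∀ k l : Fin N, k ≤ l → lam l ≤ lam k)
    (hgap : ∀ k : Fin N, k ≠ ⟨0, by omega⟩ → lam k < 1)
    (hlow : ∀ k : Fin N, -1 < lam k)
    (lamStar : ℝ)
    (hlamStar : lamStar = max |lam ⟨1, by omega⟩| |lam ⟨N - 1, by omega⟩|)
    (hlamStar0 : 0 < lamStar) (hlamStar1 : lamStar < 1)
    (Q : Matrix (Fin N) (Fin N) ℝ)
    (hQ : IsMoorePenrose (1 - S ^ 2) Q)
    (ε : ℝ) (hε : 0 < ε) (ℓ : ℕ)
    (hℓ : Real.log (2 / (ε * (1 - lamStar))) / (2 * Real.log (1 / lamStar)) ≤ ℓ)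
    (i : Fin N) :
    |Q i i - ∑ j ∈ Finset.range ℓ, ((P ^ (2 * j)) i i - pv i)| ≤ ε / 2 := by
  have hN0 : 0 < N := by omega
  set k0 : Fin N := ⟨0, by omega⟩ with hk0
  -- basic facts about sqrt of degrees
  have hsq : ∀ i, Real.sqrt (d i) ≠ 0 := fun i =>
    ne_of_gt (Real.sqrt_pos.mpr (hdpos i))
  have hds : ∀ i, Real.sqrt (d i) * Real.sqrt (d i) = d i := fun i =>
    Real.mul_self_sqrt (hdpos i).le
  -- symmetry of S
  have hSsym : Sᵀ = S := by
    rw [hSdef]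
    simp [transpose_mul, Matrix.diagonal_transpose, hA, Matrix.mul_assoc]
  have hSe : ∀ a b, S a b = S b a := fun a b => by
    conv_lhs => rw [← hSsym]
    rfl
  -- the orthogonal matrix of eigenvectors
  set U : Matrix (Fin N) (Fin N) ℝ := Matrix.of ψ with hU
  have hUUt : U * Uᵀ = 1 := by
    ext k l
    have : (U * Uᵀ) k l = ψ k ⬝ᵥ ψ l := by simp [mul_apply, dotProduct, hU]
    rw [this, horth, one_apply]
  have hUtU : Uᵀ * U = 1 := mul_eq_one_comm.mp hUUt
  have hT : ∀ (f : Fin N → ℝ) (i : Fin N),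
      (Uᵀ * Matrix.diagonal f * U) i i = ∑ k, f k * (ψ k i)^2 := by
    intro f i
    rw [mul_apply]
    refine Finset.sum_congr rfl fun k _ => ?_
    rw [Matrix.mul_diagonal]
    simp [hU, transpose_apply]
    ring
  have hTmul : ∀ f g : Fin N → ℝ, (Uᵀ * Matrix.diagonal f * U) * (Uᵀ * Matrix.diagonal g * U)
      = Uᵀ * Matrix.diagonal (fun k => f k * g k) * U := by
    intro f g
    calc (Uᵀ * Matrix.diagonal f * U) * (Uᵀ * Matrix.diagonal g * U)
        = Uᵀ * Matrix.diagonal f * (U * Uᵀ) * (Matrix.diagonal g * U) := by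
          simp only [Matrix.mul_assoc]
    _ = Uᵀ * (Matrix.diagonal f * Matrix.diagonal g) * U := by
          rw [hUUt]; simp only [Matrix.mul_one, Matrix.mul_assoc]
    _ = Uᵀ * Matrix.diagonal (fun k => f k * g k) * U := by
          rw [Matrix.diagonal_mul_diagonal]
  have hTone : Uᵀ * Matrix.diagonal (fun _ : Fin N => (1:ℝ)) * U = 1 := by
    rw [Matrix.diagonal_one, Matrix.mul_one, hUtU]
  have hTsym : ∀ f : Fin N → ℝ, (Uᵀ * Matrix.diagonal f * U)ᵀ = Uᵀ * Matrix.diagonal f * U := by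
    intro f
    rw [transpose_mul, transpose_mul, Matrix.diagonal_transpose, transpose_transpose,
      Matrix.mul_assoc]
  -- eigendecomposition of S
  have hUS : U * S = Matrix.diagonal lam * U := by
    ext k j
    rw [mul_apply, Matrix.diagonal_mul]
    have : ∑ x, U k x * S x j = (S.mulVec (ψ k)) j := by
      rw [mulVec]
      simp only [dotProduct, hU, of_apply]
      exact Finset.sum_congr rfl fun x _ => by rw [hSe x j]; ring
    rw [this, heig]
    simp [hU]
  have hSdecomp : S = Uᵀ * Matrix.diagonal lam * U := by
    calc S = (Uᵀ * U) * S := by rw [hUtU, Matrix.one_mul]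
    _ = Uᵀ * (U * S) := by rw [Matrix.mul_assoc]
    _ = Uᵀ * Matrix.diagonal lam * U := by rw [hUS, Matrix.mul_assoc]
  have hSpow : ∀ m : ℕ, S ^ m = Uᵀ * Matrix.diagonal (fun k => lam k ^ m) * U := by
    intro m
    induction m with
    | zero =>
        rw [pow_zero, ← hTone]
        congr 1
    | succ m ih =>
        rw [pow_succ, ih, hSdecomp, hTmul]
        congr 1
  -- the stationary distribution is the square of the top eigenvector
  set v : Fin N → ℝ := fun i => Real.sqrt (d i) with hv
  have hSv : S.mulVec v = v := by
    funext i
    rw [hSdef]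
    simp only [mulVec, dotProduct, Matrix.mul_diagonal, Matrix.diagonal_mul, hv]
    have : ∀ j, (Real.sqrt (d i))⁻¹ * A i j * (Real.sqrt (d j))⁻¹ * Real.sqrt (d j)
        = (Real.sqrt (d i))⁻¹ * A i j := by
      intro j
      rw [mul_assoc, inv_mul_cancel₀ (hsq j), mul_one]
    rw [Finset.sum_congr rfl fun j _ => this j, ← Finset.mul_sum, ← hd i]
    rw [inv_mul_eq_div, div_eq_iff (hsq i)]
    exact (hds i).symm
  set c : Fin N → ℝ := fun k => ψ k ⬝ᵥ v with hc
  have hck : ∀ k : Fin N, k ≠ k0 → c k = 0 := by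
    intro k hk
    have h1 : c k = lam k * c k := by
      calc c k = ψ k ⬝ᵥ (S.mulVec v) := by rw [hSv]
      _ = (S.mulVec (ψ k)) ⬝ᵥ v := by
          rw [dotProduct_mulVec, ← mulVec_transpose, hSsym]
      _ = lam k * c k := by rw [heig, smul_dotProduct]; rfl
    have h2 : (1 - lam k) * c k = 0 := by linarith [h1]
    rcases mul_eq_zero.mp h2 with h | h
    · exact absurd (by linarith : lam k = 1) (ne_of_lt (hgap k hk))
    · exact h
  have hexp : ∀ i, v i = ∑ k, c k * ψ k i := by
    intro i
    have hent : ∀ j, (∑ k, ψ k j * ψ k i) = if j = i then (1:ℝ) else 0 := by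
      intro j
      have h2 : (Uᵀ * U) j i = (1 : Matrix (Fin N) (Fin N) ℝ) j i := by rw [hUtU]
      simpa [mul_apply, one_apply, hU] using h2
    calc v i = ∑ j, (if j = i then (1:ℝ) else 0) * v j := by
          rw [Finset.sum_eq_single i]
          · simp
          · intro b _ hb; simp [hb]
          · intro hh; exact absurd (Finset.mem_univ i) hh
    _ = ∑ j, (∑ k, ψ k j * ψ k i) * v j := by
          exact Finset.sum_congr rfl fun j _ => by rw [hent j]
    _ = ∑ j, ∑ k, ψ k j * ψ k i * v j := by
          exact Finset.sum_congr rfl fun j _ => by rw [Finset.sum_mul]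
    _ = ∑ k, ∑ j, ψ k j * ψ k i * v j := Finset.sum_comm
    _ = ∑ k, c k * ψ k i := by
          refine Finset.sum_congr rfl fun k _ => ?_
          rw [hc]
          simp only [dotProduct]
          rw [Finset.sum_mul]
          exact Finset.sum_congr rfl fun j _ => by ring
  have hvi : ∀ i, v i = c k0 * ψ k0 i := by
    intro i
    rw [hexp i, Finset.sum_eq_single k0]
    · intro b _ hb; rw [hck b hb, zero_mul]
    · intro hh; exact absurd (Finset.mem_univ k0) hh
  have hdsumpos : 0 < dsum := by
    rw [hdsum]
    exact Finset.sum_pos (fun i _ => hdpos i) ⟨k0, Finset.mem_univ k0⟩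
  have hc0sq : c k0 ^ 2 = dsum := by
    have h1 : dsum = ∑ i, v i ^ 2 := by
      rw [hdsum]
      exact Finset.sum_congr rfl fun i _ => by rw [hv, sq, hds i]
    have h2 : ∑ i, v i ^ 2 = c k0 ^ 2 * ∑ i, ψ k0 i ^ 2 := by
      rw [Finset.mul_sum]
      exact Finset.sum_congr rfl fun i _ => by rw [hvi i]; ring
    have h3 : ∑ i, ψ k0 i ^ 2 = 1 := by
      have h4 := horth k0 k0
      rw [if_pos rfl] at h4
      simp only [dotProduct] at h4
      rw [← h4]
      exact Finset.sum_congr rfl fun i _ => (sq (ψ k0 i))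
    rw [h1, h2, h3, mul_one]
  have hpv2 : ∀ i, pv i = (ψ k0 i)^2 := by
    intro i
    have hc0ne : c k0 ^ 2 ≠ 0 := by rw [hc0sq]; exact ne_of_gt hdsumpos
    have hdv : d i = v i ^ 2 := by rw [hv, sq, hds i]
    rw [hpv i, hdv, hvi i, mul_pow, ← hc0sq]
    field_simp
    exact mul_div_cancel_left₀ _ (fun h => hc0ne (by rw [h]; ring))
  -- P and S powers have the same diagonal entries
  set Dl : Matrix (Fin N) (Fin N) ℝ := Matrix.diagonal (fun i => (Real.sqrt (d i))⁻¹) with hDl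
  set Dr : Matrix (Fin N) (Fin N) ℝ := Matrix.diagonal (fun i => Real.sqrt (d i)) with hDr
  have hDlr : Dl * Dr = 1 := by
    rw [hDl, hDr, Matrix.diagonal_mul_diagonal,
      show (fun i => (Real.sqrt (d i))⁻¹ * Real.sqrt (d i)) = fun _ : Fin N => (1:ℝ) from
        funext fun i => inv_mul_cancel₀ (hsq i), Matrix.diagonal_one]
  have hDrl : Dr * Dl = 1 := by
    rw [hDr, hDl, Matrix.diagonal_mul_diagonal,
      show (fun i => Real.sqrt (d i) * (Real.sqrt (d i))⁻¹) = fun _ : Fin N => (1:ℝ) from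
        funext fun i => mul_inv_cancel₀ (hsq i), Matrix.diagonal_one]
  have hDll : Dl * Dl = Matrix.diagonal (fun i => (d i)⁻¹) := by
    rw [hDl, Matrix.diagonal_mul_diagonal,
      show (fun i => (Real.sqrt (d i))⁻¹ * (Real.sqrt (d i))⁻¹) = fun i => (d i)⁻¹ from
        funext fun i => by rw [← mul_inv, hds]]
  have hPS : P = Dl * S * Dr := by
    rw [hP, hSdef]
    calc Matrix.diagonal (fun i => (d i)⁻¹) * A
        = Matrix.diagonal (fun i => (d i)⁻¹) * A * 1 := by rw [Matrix.mul_one]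
    _ = (Dl * Dl) * A * (Dl * Dr) := by rw [hDll, hDlr]
    _ = Dl * (Dl * A * Dl) * Dr := by simp only [Matrix.mul_assoc]
  have hPm : ∀ m : ℕ, P ^ m = Dl * S ^ m * Dr := by
    intro m
    induction m with
    | zero => rw [pow_zero, pow_zero, Matrix.mul_one, hDlr]
    | succ m ih =>
        rw [pow_succ, pow_succ, ih, hPS]
        calc Dl * S ^ m * Dr * (Dl * S * Dr) = Dl * S ^ m * (Dr * Dl) * (S * Dr) := by
              simp only [Matrix.mul_assoc]
        _ = Dl * (S ^ m * S) * Dr := by rw [hDrl]; simp only [Matrix.mul_one, Matrix.mul_assoc]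
  have hPii : ∀ (m : ℕ), (P ^ m) i i = (S ^ m) i i := by
    intro m
    rw [hPm m, hDl, hDr, Matrix.mul_diagonal, Matrix.diagonal_mul]
    field_simp
    exact mul_div_cancel_left₀ _ (hsq i)
  -- identification of Q
  set F : Fin N → ℝ := fun k => 1 - lam k ^ 2 with hF
  set G : Fin N → ℝ := fun k => if k = k0 then 0 else (1 - lam k ^ 2)⁻¹ with hG
  have hFpos : ∀ k : Fin N, k ≠ k0 → 0 < F k := by
    intro k hk
    have h1 := hgap k hk
    have h2 := hlow k
    simp only [hF]
    nlinarith
  have hFk0 : F k0 = 0 := by rw [hF]; simp only; rw [hlam0]; norm_num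
  have h1S : 1 - S ^ 2 = Uᵀ * Matrix.diagonal F * U := by
    rw [hSpow 2, ← hTone]
    calc Uᵀ * Matrix.diagonal (fun _ : Fin N => (1:ℝ)) * U
          - Uᵀ * Matrix.diagonal (fun k => lam k ^ 2) * U
        = Uᵀ * (Matrix.diagonal (fun _ : Fin N => (1:ℝ))
            - Matrix.diagonal (fun k => lam k ^ 2)) * U := by
          rw [Matrix.mul_sub, Matrix.sub_mul]
    _ = Uᵀ * Matrix.diagonal F * U := by rw [Matrix.diagonal_sub]
  have hFGF : ∀ k, F k * G k * F k = F k := by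
    intro k
    by_cases hk : k = k0
    · rw [hk, hFk0]; ring
    · simp only [hG, hF, if_neg hk]
      field_simp
  have hGFG : ∀ k, G k * F k * G k = G k := by
    intro k
    by_cases hk : k = k0
    · rw [hk, hG]; simp
    · have h5 := hFpos k hk
      simp only [hF] at h5
      simp only [hG, hF, if_neg hk]
      field_simp
  have hMPQ2 : IsMoorePenrose (Uᵀ * Matrix.diagonal F * U) (Uᵀ * Matrix.diagonal G * U) := by
    refine ⟨?_, ?_, ?_, ?_⟩
    · rw [hTmul, hTmul]
      congr 1
      · congr 1
        exact congrArg _ (funext hFGF)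
    · rw [hTmul, hTmul]
      congr 1
      · congr 1
        exact congrArg _ (funext hGFG)
    · rw [hTmul, hTsym]
    · rw [hTmul, hTsym]
  have hQeq : Q = Uᵀ * Matrix.diagonal G * U := by
    rw [h1S] at hQ
    exact mp_unique hQ hMPQ2
  -- the index set of nontrivial eigenvalues
  set E := Finset.univ.erase k0 with hE
  have hQii : Q i i = ∑ k ∈ E, (1 - lam k ^ 2)⁻¹ * (ψ k i)^2 := by
    rw [hQeq, hT]
    rw [← Finset.add_sum_erase _ _ (Finset.mem_univ k0)]
    rw [show G k0 = 0 from by rw [hG]; simp, zero_mul, zero_add]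
    exact Finset.sum_congr rfl fun k hk => by
      rw [hG]; simp only [if_neg (Finset.mem_erase.mp hk).1]
  have hSjj : ∀ j : ℕ, (P ^ (2 * j)) i i - pv i = ∑ k ∈ E, ((lam k ^ 2) ^ j) * (ψ k i)^2 := by
    intro j
    rw [hPii, hSpow, hT]
    rw [← Finset.add_sum_erase _ _ (Finset.mem_univ k0)]
    rw [hlam0, one_pow, one_mul, hpv2 i]
    rw [add_sub_cancel_left]
    exact Finset.sum_congr rfl fun k _ => by rw [pow_mul]
  have htot : ∑ k, (ψ k i)^2 = 1 := by
    have h1 := hT (fun _ : Fin N => (1:ℝ)) i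
    rw [hTone, one_apply_eq] at h1
    simp only [one_mul] at h1
    exact h1.symm
  have hEsum : ∑ k ∈ E, (ψ k i)^2 ≤ 1 := by
    rw [← htot]
    exact Finset.sum_le_sum_of_subset_of_nonneg (Finset.erase_subset _ _)
      (fun k _ _ => sq_nonneg _)
  -- eigenvalue bound on E
  have habs : ∀ k ∈ E, lam k ^ 2 ≤ lamStar ^ 2 := by
    intro k hk
    have hkne : k ≠ k0 := (Finset.mem_erase.mp hk).1
    have hk1 : (1:ℕ) ≤ k.val := by
      rcases Nat.eq_zero_or_pos k.val with h | h
      · exact absurd (Fin.ext h : k = k0) hkne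
      · exact h
    set κ1 : Fin N := ⟨1, by omega⟩
    set κN : Fin N := ⟨N - 1, by omega⟩
    have hle1 : κ1 ≤ k := by rw [Fin.le_def]; exact hk1
    have hleN : k ≤ κN := by
      rw [Fin.le_def]
      have := k.isLt
      show k.val ≤ N - 1
      omega
    have hub : lam k ≤ lamStar := by
      calc lam k ≤ lam κ1 := hanti κ1 k hle1
      _ ≤ |lam κ1| := le_abs_self _
      _ ≤ lamStar := by rw [hlamStar]; exact le_max_left _ _
    have hlb : -lamStar ≤ lam k := by
      have h1 : |lam κN| ≤ lamStar := by rw [hlamStar]; exact le_max_right _ _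
      calc -lamStar ≤ -|lam κN| := by linarith
      _ ≤ lam κN := neg_abs_le _
      _ ≤ lam k := hanti k κN hleN
    exact sq_le_sq' hlb hub
  have hsq1 : lamStar ^ 2 < 1 := by nlinarith
  have h1ms : (0:ℝ) < 1 - lamStar ^ 2 := by linarith
  -- the exact error formula
  have hdiff : Q i i - ∑ j ∈ Finset.range ℓ, ((P ^ (2 * j)) i i - pv i)
      = ∑ k ∈ E, ((lam k ^ 2) ^ ℓ / (1 - lam k ^ 2)) * (ψ k i)^2 := by
    rw [hQii]
    rw [Finset.sum_congr rfl fun j _ => hSjj j]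
    rw [Finset.sum_comm]
    rw [← Finset.sum_sub_distrib]
    refine Finset.sum_congr rfl fun k hk => ?_
    have hkne : k ≠ k0 := (Finset.mem_erase.mp hk).1
    have hFp := hFpos k hkne
    simp only [hF] at hFp
    have hne1 : lam k ^ 2 ≠ 1 := by intro h; rw [h] at hFp; linarith
    rw [← Finset.sum_mul, geom_sum_eq hne1]
    have hne : 1 - lam k ^ 2 ≠ 0 := ne_of_gt hFp
    have hne' : lam k ^ 2 - 1 ≠ 0 := fun h => hne (by linarith)
    field_simp
    ring
  rw [hdiff]
  -- bound each term
  have hterm : ∀ k ∈ E, ((lam k ^ 2) ^ ℓ / (1 - lam k ^ 2)) * (ψ k i)^2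
      ≤ (lamStar ^ (2 * ℓ) / (1 - lamStar ^ 2)) * (ψ k i)^2 := by
    intro k hk
    have hkne : k ≠ k0 := (Finset.mem_erase.mp hk).1
    have hFp := hFpos k hkne
    simp only [hF] at hFp
    have h1 : (lam k ^ 2) ^ ℓ ≤ (lamStar ^ 2) ^ ℓ :=
      pow_le_pow_left₀ (sq_nonneg _) (habs k hk) ℓ
    have h2 : (1 - lam k ^ 2)⁻¹ ≤ (1 - lamStar ^ 2)⁻¹ := by
      apply inv_anti₀ h1ms
      nlinarith [habs k hk]
    have h3 : (lam k ^ 2) ^ ℓ / (1 - lam k ^ 2) ≤ lamStar ^ (2 * ℓ) / (1 - lamStar ^ 2) := by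
      rw [div_eq_mul_inv, div_eq_mul_inv, pow_mul]
      exact mul_le_mul h1 h2 (by positivity) (by positivity)
    exact mul_le_mul_of_nonneg_right h3 (sq_nonneg _)
  have hnn : ∀ k ∈ E, 0 ≤ ((lam k ^ 2) ^ ℓ / (1 - lam k ^ 2)) * (ψ k i)^2 := by
    intro k hk
    have hkne : k ≠ k0 := (Finset.mem_erase.mp hk).1
    have hFp := hFpos k hkne
    simp only [hF] at hFp
    positivity
  -- numeric bound
  have hB : lamStar ^ (2 * ℓ) / (1 - lamStar ^ 2) ≤ ε / 2 := by
    have h1 : (0:ℝ) < 1 - lamStar := by linarith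
    have hx : (0:ℝ) < ε * (1 - lamStar) / 2 := by positivity
    have hlogneg : Real.log lamStar < 0 := Real.log_neg hlamStar0 hlamStar1
    have hlog1 : Real.log (1 / lamStar) = - Real.log lamStar := by
      rw [one_div, Real.log_inv]
    have hLrw : Real.log (2 / (ε * (1 - lamStar))) = - Real.log (ε * (1 - lamStar) / 2) := by
      rw [← Real.log_inv]
      congr 1
      field_simp
    have hden : (0:ℝ) < 2 * Real.log (1 / lamStar) := by rw [hlog1]; linarith
    have h2 : Real.log (2 / (ε * (1 - lamStar))) ≤ ℓ * (2 * Real.log (1 / lamStar)) :=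
      (div_le_iff₀ hden).mp hℓ
    have h3 : (2 * ℓ : ℝ) * Real.log lamStar ≤ Real.log (ε * (1 - lamStar) / 2) := by
      rw [hLrw, hlog1] at h2
      nlinarith [h2]
    have h4 : lamStar ^ (2 * ℓ) ≤ ε * (1 - lamStar) / 2 := by
      calc lamStar ^ (2 * ℓ) = Real.exp (Real.log (lamStar ^ (2 * ℓ))) :=
            (Real.exp_log (pow_pos hlamStar0 _)).symm
      _ ≤ Real.exp (Real.log (ε * (1 - lamStar) / 2)) := by
            apply Real.exp_le_exp.mpr
            rw [Real.log_pow]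
            push_cast
            exact h3
      _ = ε * (1 - lamStar) / 2 := Real.exp_log hx
    rw [div_le_iff₀ h1ms]
    nlinarith [h4, pow_pos hlamStar0 (2*ℓ)]
  -- conclude
  have hfinal : ∑ k ∈ E, ((lam k ^ 2) ^ ℓ / (1 - lam k ^ 2)) * (ψ k i)^2 ≤ ε / 2 := by
    calc ∑ k ∈ E, ((lam k ^ 2) ^ ℓ / (1 - lam k ^ 2)) * (ψ k i)^2
        ≤ ∑ k ∈ E, (lamStar ^ (2 * ℓ) / (1 - lamStar ^ 2)) * (ψ k i)^2 :=
          Finset.sum_le_sum hterm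
    _ = (lamStar ^ (2 * ℓ) / (1 - lamStar ^ 2)) * ∑ k ∈ E, (ψ k i)^2 := by
          rw [Finset.mul_sum]
    _ ≤ (lamStar ^ (2 * ℓ) / (1 - lamStar ^ 2)) * 1 :=
          mul_le_mul_of_nonneg_left hEsum (by positivity)
    _ = lamStar ^ (2 * ℓ) / (1 - lamStar ^ 2) := mul_one _
    _ ≤ ε / 2 := hB
  rw [abs_of_nonneg (Finset.sum_nonneg hnn)]
  exact hfinal
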